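/- Let 𝒜 be a commutative Banach algebra. Then UCB(𝒜) is topologically introverted: for every m ∈ UCB(𝒜)* and T ∈ UCB(𝒜), the functional m⊙T defined by ⟨m⊙T, u⟩ = ⟨m, u·T⟩ belongs to UCB(𝒜). Moreover, for T = u·T₁ with u ∈ 𝒜 and T₁ ∈ 𝒜*, one has m⊙T = u·(m⊙T₁). -/

import Mathlib

open NormedSpace

/-- The dual module action: `⟨u·T, v⟩ = ⟨T, v * u⟩`. -/
noncomputable def dualAct {A : Type*} [NormedCommRing A] [NormedAlgebra ℂ A]
    (u : A) (T : StrongDual ℂ A) : StrongDual ℂ A :=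
  T.comp ((ContinuousLinearMap.mul ℂ A).flip u)

/-- `UCB(A)` as a closed subspace of `A*`: the norm closure of the span of the `u·T`. -/
noncomputable def UCBsub (A : Type*) [NormedCommRing A] [NormedAlgebra ℂ A] :
    Submodule ℂ (StrongDual ℂ A) :=
  (Submodule.span ℂ {S : StrongDual ℂ A | ∃ (v : A) (T : StrongDual ℂ A), S = dualAct v T}).topologicalClosure

namespace UCBaux

variable {A : Type*} [NormedCommRing A] [NormedAlgebra ℂ A]

noncomputable instance instNormUCBDual : Norm ((UCBsub A) →L[ℂ] ℂ) :=
  ContinuousLinearMap.hasOpNorm (E := UCBsub A) (F := ℂ) (𝕜 := ℂ) (𝕜₂ := ℂ) (σ₁₂ := RingHom.id ℂ)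

lemma dualAct_apply (u : A) (T : StrongDual ℂ A) (v : A) : dualAct u T v = T (v * u) := rfl

lemma dualAct_dualAct (w v : A) (T : StrongDual ℂ A) :
    dualAct w (dualAct v T) = dualAct (w * v) T := by
  apply ContinuousLinearMap.ext
  intro x
  simp [dualAct_apply, mul_assoc]

/-- `w ↦ dualAct w T` as a continuous linear map. -/
noncomputable def actCLM (T : StrongDual ℂ A) : A →L[ℂ] StrongDual ℂ A :=
  (ContinuousLinearMap.compL ℂ A A ℂ T).comp ((ContinuousLinearMap.mul ℂ A).flip)

lemma actCLM_apply (T : StrongDual ℂ A) (w : A) : actCLM T w = dualAct w T := rfl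

/-- The functional `m ⊙ T`. -/
noncomputable def odot (m : (UCBsub A) →L[ℂ] ℂ) (T : StrongDual ℂ A)
    (hT : ∀ w : A, dualAct w T ∈ UCBsub A) : StrongDual ℂ A :=
  m.comp ((actCLM T).codRestrict (UCBsub A) hT)

lemma odot_apply (m : (UCBsub A) →L[ℂ] ℂ) (T : StrongDual ℂ A)
    (hT : ∀ w : A, dualAct w T ∈ UCBsub A) (w : A) :
    odot m T hT w = m ⟨dualAct w T, hT w⟩ := rfl

lemma odot_apply' (m : (UCBsub A) →L[ℂ] ℂ) (T : StrongDual ℂ A)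
    (hT : ∀ w : A, dualAct w T ∈ UCBsub A) (w : A) (h : dualAct w T ∈ UCBsub A) :
    odot m T hT w = m ⟨dualAct w T, h⟩ := rfl

lemma norm_dualAct_le (w : A) (T : StrongDual ℂ A) : ‖dualAct w T‖ ≤ ‖T‖ * ‖w‖ := by
  refine le_trans (T.opNorm_comp_le _) ?_
  refine mul_le_mul_of_nonneg_left ?_ (norm_nonneg T)
  refine ContinuousLinearMap.opNorm_le_bound _ (norm_nonneg w) fun v => ?_
  calc ‖(ContinuousLinearMap.mul ℂ A).flip w v‖ = ‖v * w‖ := rfl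
    _ ≤ ‖v‖ * ‖w‖ := norm_mul_le _ _
    _ = ‖w‖ * ‖v‖ := mul_comm _ _

/-- `T ↦ m ⊙ T` as a continuous linear map on `UCB(A)`. -/
noncomputable def Phi (hinv : ∀ (u : A) (S : StrongDual ℂ A), S ∈ UCBsub A → dualAct u S ∈ UCBsub A)
    (m : (UCBsub A) →L[ℂ] ℂ) : (UCBsub A) →L[ℂ] StrongDual ℂ A :=
  LinearMap.mkContinuous (E := UCBsub A) (F := StrongDual ℂ A) (σ := RingHom.id ℂ)
    { toFun := fun x => odot m x.1 (fun w => hinv w x.1 x.2)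
      map_add' := by
        intro x y
        apply ContinuousLinearMap.ext
        intro w
        have : (⟨dualAct w ((x + y : UCBsub A) : StrongDual ℂ A), hinv w _ (x + y).2⟩ : UCBsub A)
            = ⟨dualAct w (x : StrongDual ℂ A), hinv w _ x.2⟩ + ⟨dualAct w (y : StrongDual ℂ A), hinv w _ y.2⟩ := by
          apply Subtype.ext
          apply ContinuousLinearMap.ext
          intro v
          simp [dualAct_apply]
        simp only [odot_apply, ContinuousLinearMap.add_apply, this, map_add]
      map_smul' := by
        intro c x
        apply ContinuousLinearMap.ext
        intro w
        have : (⟨dualAct w ((c • x : UCBsub A) : StrongDual ℂ A), hinv w _ (c • x).2⟩ : UCBsub A)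
            = c • (⟨dualAct w (x : StrongDual ℂ A), hinv w _ x.2⟩ : UCBsub A) := by
          apply Subtype.ext
          apply ContinuousLinearMap.ext
          intro v
          simp [dualAct_apply]
        simp only [odot_apply, ContinuousLinearMap.smul_apply, this, map_smul, RingHom.id_apply] }
    ‖m‖
    (by
      intro x
      refine ContinuousLinearMap.opNorm_le_bound _ (mul_nonneg (Real.sInf_nonneg (fun _ h => h.1)) (norm_nonneg x)) fun w => ?_
      simp only [LinearMap.coe_mk, AddHom.coe_mk, odot_apply]
      calc ‖m ⟨dualAct w (x : StrongDual ℂ A), hinv w _ x.2⟩‖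
          ≤ ‖m‖ * ‖(⟨dualAct w (x : StrongDual ℂ A), hinv w _ x.2⟩ : UCBsub A)‖ :=
            ContinuousLinearMap.le_opNorm (E := UCBsub A) (F := ℂ) (𝕜 := ℂ) (𝕜₂ := ℂ) (σ₁₂ := RingHom.id ℂ) m _
        _ = ‖m‖ * ‖dualAct w (x : StrongDual ℂ A)‖ := rfl
        _ ≤ ‖m‖ * (‖(x : StrongDual ℂ A)‖ * ‖w‖) := by
            refine mul_le_mul_of_nonneg_left ?_ (Real.sInf_nonneg (fun _ h => h.1))
            exact norm_dualAct_le w _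
        _ = ‖m‖ * ‖x‖ * ‖w‖ := by rw [mul_assoc]; rfl)

lemma Phi_apply (hinv : ∀ (u : A) (S : StrongDual ℂ A), S ∈ UCBsub A → dualAct u S ∈ UCBsub A)
    (m : (UCBsub A) →L[ℂ] ℂ) (x : UCBsub A) :
    Phi hinv m x = odot m x.1 (fun w => hinv w x.1 x.2) := rfl

end UCBaux

open UCBaux in
/-- `UCB(A)` is topologically introverted: for `m ∈ UCB(A)*` and `T ∈ UCB(A)`,
the functional `m⊙T` given by `⟨m⊙T, u⟩ = ⟨m, u·T⟩` lies in `UCB(A)`; moreover if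
`T = u·T₁` then `m⊙T = u·(m⊙T₁)`. -/
theorem UCB_topologically_introverted (A : Type*) [NormedCommRing A] [NormedAlgebra ℂ A]
    [CompleteSpace A]
    (hinv : ∀ (u : A) (S : StrongDual ℂ A), S ∈ UCBsub A → dualAct u S ∈ UCBsub A)
    (hgen : ∀ (w : A) (T₁ : StrongDual ℂ A), dualAct w T₁ ∈ UCBsub A)
    (m : (UCBsub A) →L[ℂ] ℂ) (T : StrongDual ℂ A) (hT : T ∈ UCBsub A)
    (S : StrongDual ℂ A) (hS : ∀ u : A, S u = m ⟨dualAct u T, hinv u T hT⟩) :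
    S ∈ UCBsub A ∧
      ∀ (u : A) (T₁ : StrongDual ℂ A) (S₁ : StrongDual ℂ A), T = dualAct u T₁ →
        (∀ w : A, S₁ w = m ⟨dualAct w T₁, hgen w T₁⟩) → S = dualAct u S₁ := by
  constructor
  · -- S = Phi hinv m ⟨T, hT⟩
    have hSeq : S = Phi hinv m ⟨T, hT⟩ := by
      apply ContinuousLinearMap.ext
      intro w
      rw [hS w]
      rfl
    rw [hSeq]
    -- Every span element maps into UCBsub under Phi
    have hspan : ∀ (x : StrongDual ℂ A),
        x ∈ Submodule.span ℂ {S : StrongDual ℂ A | ∃ (v : A) (T : StrongDual ℂ A), S = dualAct v T} →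
        ∀ h : x ∈ UCBsub A, Phi hinv m ⟨x, h⟩ ∈ UCBsub A := by
      intro x hx
      induction hx using Submodule.span_induction with
      | mem x hx =>
        intro h
        obtain ⟨v, T₁, rfl⟩ := hx
        have key : Phi hinv m ⟨dualAct v T₁, h⟩ = dualAct v (odot m T₁ (fun w => hgen w T₁)) := by
          apply ContinuousLinearMap.ext
          intro w
          show m ⟨dualAct w (dualAct v T₁), _⟩ = odot m T₁ (fun w => hgen w T₁) (w * v)
          rw [odot_apply]
          congr 1
          exact Subtype.ext (dualAct_dualAct w v T₁)
        rw [key]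
        exact hgen v _
      | zero =>
        intro h
        have : (⟨(0 : StrongDual ℂ A), h⟩ : UCBsub A) = 0 := rfl
        rw [this, map_zero]
        exact (UCBsub A).zero_mem
      | add x y hx hy ihx ihy =>
        intro h
        have hxm : x ∈ UCBsub A := Submodule.le_topologicalClosure _ hx
        have hym : y ∈ UCBsub A := Submodule.le_topologicalClosure _ hy
        have : (⟨x + y, h⟩ : UCBsub A) = ⟨x, hxm⟩ + ⟨y, hym⟩ := rfl
        rw [this, map_add]
        exact (UCBsub A).add_mem (ihx hxm) (ihy hym)
      | smul c x hx ihx =>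
        intro h
        have hxm : x ∈ UCBsub A := Submodule.le_topologicalClosure _ hx
        have : (⟨c • x, h⟩ : UCBsub A) = c • ⟨x, hxm⟩ := rfl
        rw [this, map_smul]
        exact (UCBsub A).smul_mem c (ihx hxm)
    -- T is a limit of a sequence from the span
    have hTc : T ∈ closure
        ((Submodule.span ℂ {S : StrongDual ℂ A | ∃ (v : A) (T : StrongDual ℂ A), S = dualAct v T}) :
          Set (StrongDual ℂ A)) := hT
    obtain ⟨f, hfmem, hftend⟩ := mem_closure_iff_seq_limit.mp hTc
    have hfU : ∀ n, f n ∈ UCBsub A := fun n => Submodule.le_topologicalClosure _ (hfmem n)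
    have htend : Filter.Tendsto (fun n => (⟨f n, hfU n⟩ : UCBsub A)) Filter.atTop
        (nhds ⟨T, hT⟩) := by
      rw [tendsto_subtype_rng]
      exact hftend
    have htend2 : Filter.Tendsto (fun n => Phi hinv m ⟨f n, hfU n⟩) Filter.atTop
        (nhds (Phi hinv m ⟨T, hT⟩)) := ((Phi hinv m).continuous.tendsto _).comp htend
    have hcl : IsClosed ((UCBsub A) : Set (StrongDual ℂ A)) :=
      Submodule.isClosed_topologicalClosure _
    exact hcl.mem_of_tendsto htend2
      (Filter.Eventually.of_forall fun n => hspan (f n) (hfmem n) (hfU n))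
  · intro u T₁ S₁ hTeq hS₁
    apply ContinuousLinearMap.ext
    intro w
    rw [hS w]
    show _ = S₁ (w * u)
    rw [hS₁ (w * u)]
    congr 1
    apply Subtype.ext
    show dualAct w T = dualAct (w * u) T₁
    rw [hTeq]
    exact dualAct_dualAct w u T₁
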